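/- Let Y be a proper geodesic metric space, ρ a sublinear function, and Z ⊆ Y a closed ρ-contracting set. Let K' ≥ 1, C' ≥ 0 and let β : [0,∞) → Y be a continuous (K',C')-quasi-geodesic ray with d(β(0), Z) ≤ κ(ρ,K',C'). Then exactly one of the following holds: (1) the set {t ≥ 0 : d(β(t), Z) ≤ κ(ρ,K',C')} is unbounded, and every point of the image of β lies within distance κ'(ρ,K',C') of Z; or (2) the set {t ≥ 0 : d(β(t), Z) ≤ κ(ρ,K',C')} is bounded, and, letting T₀ be its maximum (which exists and satisfies d(β(T₀), Z) = κ(ρ,K',C')), one has d(β(t), Z) ≥ (1/(2K'))(t − T₀) − 2(C' + κ(ρ,K',C')) for all t ≥ 0. -/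

import Mathlib

open Set Metric

/-- A function `ρ : ℝ → ℝ` (thought of as defined on `[0,∞)`) is sublinear:
non-decreasing (on `[0,∞)`), eventually non-negative, and `ρ r / r → 0`. -/
def Sublinear (ρ : ℝ → ℝ) : Prop :=
  MonotoneOn ρ (Ici 0) ∧ (∃ R : ℝ, ∀ r ≥ R, 0 ≤ ρ r) ∧
    Filter.Tendsto (fun r => ρ r / r) Filter.atTop (nhds 0)

/-- Closest-point projection of `y` onto `Z`. -/
def ClosestPoints {Y : Type*} [MetricSpace Y] (Z : Set Y) (y : Y) : Set Y :=
  {z ∈ Z | dist y z = infDist y Z}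

/-- `Z` is a `ρ`-contracting subset. -/
def IsContracting {Y : Type*} [MetricSpace Y] (ρ : ℝ → ℝ) (Z : Set Y) : Prop :=
  ∀ x y : Y, x ∉ Z → y ∉ Z → dist x y < infDist y Z →
    diam (ClosestPoints Z x ∪ ClosestPoints Z y) ≤ ρ (infDist y Z)

/-- `β : [0,∞) → Y` is a `(K,C)`-quasi-geodesic ray. -/
def IsQGRay {Y : Type*} [MetricSpace Y] (K C : ℝ) (β : ℝ → Y) : Prop :=
  ∀ s ≥ (0:ℝ), ∀ t ≥ (0:ℝ),
    (1/K) * |s - t| - C ≤ dist (β s) (β t) ∧ dist (β s) (β t) ≤ K * |s - t| + C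

/-- `α : [0,∞) → Y` is a geodesic ray (isometric embedding of `[0,∞)`). -/
def IsGeodesicRay {Y : Type*} [MetricSpace Y] (α : ℝ → Y) : Prop :=
  ∀ s ≥ (0:ℝ), ∀ t ≥ (0:ℝ), dist (α s) (α t) = |s - t|

/-- κ(ρ,K,C) = max(3K², 3C, 1 + inf{R ≥ 0 : 3K²ρ(r) ≤ r for all r ≥ R}). -/
noncomputable def kappa (ρ : ℝ → ℝ) (K C : ℝ) : ℝ :=
  max (max (3 * K ^ 2) (3 * C))
    (1 + sInf {R : ℝ | 0 ≤ R ∧ ∀ r ≥ R, 3 * K ^ 2 * ρ r ≤ r})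

/-- κ'(ρ,K,C) = (K²+2)(2κ(ρ,K,C)+C). -/
noncomputable def kappa' (ρ : ℝ → ℝ) (K C : ℝ) : ℝ :=
  (K ^ 2 + 2) * (2 * kappa ρ K C + C)

/-- A metric space is geodesic: any two points are joined by an isometric
embedding of a compact interval. -/
def GeodesicSpace (Y : Type*) [MetricSpace Y] : Prop :=
  ∀ x y : Y, ∃ γ : ℝ → Y, γ 0 = x ∧ γ (dist x y) = y ∧
    ∀ s ∈ Icc 0 (dist x y), ∀ t ∈ Icc 0 (dist x y), dist (γ s) (γ t) = |s - t|

open Bornology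

section Aux

variable {Y : Type*} [MetricSpace Y] [ProperSpace Y] {Z : Set Y}

lemma aux_proj_nonempty (hZcl : IsClosed Z) (hZne : Z.Nonempty) (x : Y) :
    ∃ p, p ∈ ClosestPoints Z x := by
  obtain ⟨y, hy, hxy⟩ := hZcl.exists_infDist_eq_dist hZne x
  exact ⟨y, hy, hxy.symm⟩

lemma aux_notMem {x : Y} (h : 0 < infDist x Z) : x ∉ Z :=
  fun hx => by simp [infDist_zero_of_mem hx] at h

lemma aux_contract_step {ρ : ℝ → ℝ} (hZ : IsContracting ρ Z)
    {x y q p : Y} (hx : x ∉ Z) (hy : y ∉ Z) (hd : dist x y < infDist y Z)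
    (hq : q ∈ ClosestPoints Z y) (hp : p ∈ ClosestPoints Z x) :
    dist q p ≤ ρ (infDist y Z) := by
  have hbx : IsBounded (ClosestPoints Z x) := by
    apply (isBounded_closedBall (x := x) (r := infDist x Z)).subset
    intro z hz
    simpa [mem_closedBall, dist_comm] using le_of_eq hz.2
  have hby : IsBounded (ClosestPoints Z y) := by
    apply (isBounded_closedBall (x := y) (r := infDist y Z)).subset
    intro z hz
    simpa [mem_closedBall, dist_comm] using le_of_eq hz.2
  have hdd := dist_le_diam_of_mem (hbx.union hby) (Or.inr hq) (Or.inl hp)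
  exact hdd.trans (hZ x y hx hy hd)

lemma aux_limit_proj (hZcl : IsClosed Z)
    {q x : Y} {r : ℝ} {xs : ℕ → Y}
    (hxs : Filter.Tendsto xs Filter.atTop (nhds x))
    (h : ∀ k, ∃ p ∈ ClosestPoints Z (xs k), dist q p ≤ r) :
    ∃ p ∈ ClosestPoints Z x, dist q p ≤ r := by
  choose p hp hpr using h
  have hmem : ∀ k, p k ∈ closedBall q r ∩ Z := fun k =>
    ⟨by simpa [mem_closedBall, dist_comm] using hpr k, (hp k).1⟩
  obtain ⟨p₀, hp₀, φ, hφ, hlim⟩ :=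
    ((isCompact_closedBall q r).inter_right hZcl).tendsto_subseq hmem
  have h1 : Filter.Tendsto (fun k => dist (xs (φ k)) (p (φ k))) Filter.atTop
      (nhds (dist x p₀)) := (hxs.comp hφ.tendsto_atTop).dist hlim
  have h2 : Filter.Tendsto (fun k => infDist (xs (φ k)) Z) Filter.atTop
      (nhds (infDist x Z)) :=
    ((continuous_infDist_pt Z).tendsto x).comp (hxs.comp hφ.tendsto_atTop)
  have heq : (fun k => dist (xs (φ k)) (p (φ k))) = fun k => infDist (xs (φ k)) Z :=
    funext fun k => (hp (φ k)).2
  rw [heq] at h1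
  have hux : dist x p₀ = infDist x Z := tendsto_nhds_unique h1 h2
  exact ⟨p₀, ⟨hp₀.2, hux⟩, by simpa [mem_closedBall, dist_comm] using hp₀.1⟩

lemma aux_approach_right {x y : ℝ} (h : x < y) :
    Filter.Tendsto (fun k : ℕ => x + (y - x)/(k+1)) Filter.atTop (nhds x) ∧
    ∀ k : ℕ, x + (y - x)/((k:ℝ)+1) ∈ Ioc x y := by
  constructor
  · have h1 : Filter.Tendsto (fun k : ℕ => (y - x) * (1/((k:ℝ)+1))) Filter.atTop
        (nhds ((y - x) * 0)) := tendsto_one_div_add_atTop_nhds_zero_nat.const_mul _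
    have := Filter.Tendsto.add (tendsto_const_nhds (x := x)) h1
    simpa [mul_one_div, div_eq_mul_inv] using this
  · intro k
    have hk1 : (0:ℝ) < (k:ℝ) + 1 := by positivity
    have hpos : 0 < (y - x)/((k:ℝ)+1) := div_pos (by linarith) hk1
    have hle : (y - x)/((k:ℝ)+1) ≤ y - x := div_le_self (by linarith) (by linarith [Nat.cast_nonneg (α := ℝ) k])
    constructor <;> [linarith; linarith]

lemma aux_approach_left {x y : ℝ} (h : x < y) :
    Filter.Tendsto (fun k : ℕ => y + (x - y)/(k+1)) Filter.atTop (nhds y) ∧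
    ∀ k : ℕ, y + (x - y)/((k:ℝ)+1) ∈ Ico x y := by
  constructor
  · have h1 : Filter.Tendsto (fun k : ℕ => (x - y) * (1/((k:ℝ)+1))) Filter.atTop
        (nhds ((x - y) * 0)) := tendsto_one_div_add_atTop_nhds_zero_nat.const_mul _
    have := Filter.Tendsto.add (tendsto_const_nhds (x := y)) h1
    simpa [mul_one_div, div_eq_mul_inv] using this
  · intro k
    have hk1 : (0:ℝ) < (k:ℝ) + 1 := by positivity
    have hneg : (x - y)/((k:ℝ)+1) < 0 := div_neg_of_neg_of_pos (by linarith) hk1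
    have hge : x - y ≤ (x - y)/((k:ℝ)+1) := by
      rw [div_eq_mul_inv]
      have h2 : ((k:ℝ)+1)⁻¹ ≤ 1 := by
        rw [inv_le_one_iff₀]; right; linarith [Nat.cast_nonneg (α := ℝ) k]
      nlinarith
    constructor <;> [linarith; linarith]

end Aux

section Chain

variable {Y : Type*} [MetricSpace Y] [ProperSpace Y] {Z : Set Y}

lemma aux_chain {ρ : ℝ → ℝ} (hZcl : IsClosed Z) (hZ : IsContracting ρ Z)
    {K C : ℝ} (hK : 1 ≤ K) (hC : 0 ≤ C) {β : ℝ → Y}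
    (hβcont : ContinuousOn β (Ici 0)) (hβ : IsQGRay K C β)
    {κ : ℝ} (hκ1 : 1 ≤ κ) (hκC : 3 * C ≤ κ)
    (hκρ : ∀ r, κ ≤ r → 3 * K ^ 2 * ρ r ≤ r) :
    ∀ n : ℕ, ∀ a b : ℝ, 0 ≤ a → a ≤ b → b - a ≤ n * (2 * κ / (3 * K)) →
      (∀ s, s ∈ Icc a b → κ ≤ infDist (β s) Z) →
      ∀ q, q ∈ ClosestPoints Z (β b) →
      ∃ p ∈ ClosestPoints Z (β a),
        dist q p ≤ (b - a) / (2 * K) + (C + infDist (β a) Z) / (3 * K ^ 2) := by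
  have hK0 : (0:ℝ) < K := lt_of_lt_of_le one_pos hK
  intro n
  induction n with
  | zero =>
    intro a b ha hab hlen hκs q hq
    have hba : b = a := by simp at hlen; linarith
    subst hba
    refine ⟨q, hq, ?_⟩
    have h1 : (0:ℝ) ≤ C + infDist (β b) Z := by
      have := infDist_nonneg (x := β b) (s := Z); linarith
    have h2 : (0:ℝ) ≤ (C + infDist (β b) Z) / (3 * K ^ 2) := by positivity
    simp [dist_self]
    linarith
  | succ n ih =>
    intro a b ha hab hlen hκs q hq
    have hb0 : 0 ≤ b := le_trans ha hab
    have hZne : Z.Nonempty := ⟨q, hq.1⟩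
    set e₀ := infDist (β b) Z with he₀def
    have he₀κ : κ ≤ e₀ := hκs b ⟨hab, le_refl b⟩
    have he₀pos : 0 < e₀ := lt_of_lt_of_le (lt_of_lt_of_le one_pos hκ1) he₀κ
    have hβb_ne : β b ∉ Z := aux_notMem he₀pos
    set E := {s : ℝ | s ∈ Icc a b ∧ e₀ ≤ dist (β s) (β b)} with hEdef
    by_cases hE : E.Nonempty
    · -- a full step exists
      have hEcl : IsClosed E := by
        have hsub : Icc a b ⊆ Ici 0 := fun s hs => le_trans ha hs.1
        have hcont : ContinuousOn (fun s => dist (β s) (β b)) (Icc a b) :=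
          (continuous_id.dist continuous_const).comp_continuousOn (hβcont.mono hsub)
        have h := hcont.preimage_isClosed_of_isClosed isClosed_Icc (isClosed_Ici (a := e₀))
        convert h using 1
        ext s; exact Iff.rfl
      have hEbdd : BddAbove E := BddAbove.mono (fun s hs => hs.1) bddAbove_Icc
      set s₁ := sSup E with hs₁def
      have hs₁E : s₁ ∈ E := hEcl.csSup_mem hE hEbdd
      obtain ⟨⟨has₁, hs₁b⟩, hdist₁⟩ := hs₁E
      have hs₁0 : 0 ≤ s₁ := le_trans ha has₁
      have hup : dist (β s₁) (β b) ≤ K * (b - s₁) + C := by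
        have := (hβ s₁ hs₁0 b hb0).2
        rwa [abs_sub_comm, abs_of_nonneg (by linarith : (0:ℝ) ≤ b - s₁)] at this
      have hδ : 2 * κ / (3 * K) ≤ b - s₁ := by
        rw [div_le_iff₀ (by positivity : (0:ℝ) < 3 * K)]
        nlinarith
      have hδpos : (0:ℝ) < 2 * κ / (3 * K) := by positivity
      have hs₁ltb : s₁ < b := by linarith
      have hstrict : ∀ s, s₁ < s → s ≤ b → dist (β s) (β b) < e₀ := by
        intro s h1 h2
        by_contra hcon
        push_neg at hcon
        have hsE : s ∈ E := ⟨⟨le_trans has₁ h1.le, h2⟩, hcon⟩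
        exact absurd (le_csSup hEbdd hsE) (not_le.mpr h1)
      -- approach s₁ from the right
      obtain ⟨htend, hmem⟩ := aux_approach_right hs₁ltb
      have hq₁ : ∃ q₁ ∈ ClosestPoints Z (β s₁), dist q q₁ ≤ ρ e₀ := by
        apply aux_limit_proj hZcl (xs := fun k : ℕ => β (s₁ + (b - s₁)/(k+1)))
        · apply (hβcont s₁ (mem_Ici.mpr hs₁0)).tendsto.comp
          apply tendsto_nhdsWithin_of_tendsto_nhds_of_eventually_within _ htend
          exact Filter.Eventually.of_forall fun k => le_trans hs₁0 (hmem k).1.le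
        · intro k
          set s := s₁ + (b - s₁)/((k:ℝ)+1) with hsdef
          have hsIoc := hmem k
          have hsIcc : s ∈ Icc a b := ⟨le_trans has₁ hsIoc.1.le, hsIoc.2⟩
          have hsκ : κ ≤ infDist (β s) Z := hκs s hsIcc
          have hs_ne : β s ∉ Z :=
            aux_notMem (lt_of_lt_of_le (lt_of_lt_of_le one_pos hκ1) hsκ)
          obtain ⟨p', hp'⟩ := aux_proj_nonempty hZcl hZne (β s)
          exact ⟨p', hp', aux_contract_step hZ hs_ne hβb_ne
            (hstrict s hsIoc.1 hsIoc.2) hq hp'⟩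
      obtain ⟨q₁, hq₁mem, hq₁d⟩ := hq₁
      have hlen' : s₁ - a ≤ n * (2 * κ / (3 * K)) := by
        push_cast at hlen
        linarith
      obtain ⟨p, hpmem, hpd⟩ := ih a s₁ ha has₁ hlen'
        (fun s hs => hκs s ⟨hs.1, le_trans hs.2 hs₁b⟩) q₁ hq₁mem
      refine ⟨p, hpmem, ?_⟩
      have hρe : ρ e₀ ≤ (b - s₁) / (2 * K) := by
        have hA : 3 * K ^ 2 * ρ e₀ ≤ e₀ := hκρ e₀ he₀κ
        have hB : 2 * e₀ ≤ 3 * K * (b - s₁) := by nlinarith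
        rw [le_div_iff₀ (by positivity : (0:ℝ) < 2 * K)]
        have h7 : 3 * K * 0 ≤ 3 * K * ((b - s₁) - ρ e₀ * (2 * K)) := by nlinarith
        have := (mul_le_mul_iff_right₀ (by positivity : (0:ℝ) < 3 * K)).mp h7
        linarith
      have htri := dist_triangle q q₁ p
      have hsum : (b - s₁) / (2 * K) + (s₁ - a) / (2 * K) = (b - a) / (2 * K) := by
        field_simp
        ring
      linarith
    · -- no full step: single contraction to the left endpoint
      have hlt : ∀ s, s ∈ Icc a b → dist (β s) (β b) < e₀ := by
        intro s hs
        by_contra hcon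
        push_neg at hcon
        exact hE ⟨s, hs, hcon⟩
      have haκ : κ ≤ infDist (β a) Z := hκs a ⟨le_refl a, hab⟩
      have hβa_ne : β a ∉ Z :=
        aux_notMem (lt_of_lt_of_le (lt_of_lt_of_le one_pos hκ1) haκ)
      obtain ⟨p, hp⟩ := aux_proj_nonempty hZcl hZne (β a)
      have hd : dist q p ≤ ρ e₀ :=
        aux_contract_step hZ hβa_ne hβb_ne (hlt a ⟨le_refl a, hab⟩) hq hp
      refine ⟨p, hp, hd.trans ?_⟩
      have hA : 3 * K ^ 2 * ρ e₀ ≤ e₀ := hκρ e₀ he₀κ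
      have hB : e₀ ≤ infDist (β a) Z + dist (β a) (β b) := by
        rw [dist_comm]; exact infDist_le_infDist_add_dist
      have hup : dist (β a) (β b) ≤ K * (b - a) + C := by
        have := (hβ a ha b hb0).2
        rwa [abs_sub_comm, abs_of_nonneg (by linarith : (0:ℝ) ≤ b - a)] at this
      have hid : 3 * K ^ 2 * ((b - a) / (2 * K) + (C + infDist (β a) Z) / (3 * K ^ 2))
          = 3 * K * (b - a) / 2 + (C + infDist (β a) Z) := by
        field_simp
      have hmul : 3 * K ^ 2 * ρ e₀
          ≤ 3 * K ^ 2 * ((b - a) / (2 * K) + (C + infDist (β a) Z) / (3 * K ^ 2)) := by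
        rw [hid]
        nlinarith [mul_nonneg hK0.le (by linarith : (0:ℝ) ≤ b - a)]
      exact (mul_le_mul_iff_right₀ (by positivity : (0:ℝ) < 3 * K ^ 2)).mp hmul

lemma aux_chain_dist {ρ : ℝ → ℝ} (hZcl : IsClosed Z) (hZ : IsContracting ρ Z)
    {K C : ℝ} (hK : 1 ≤ K) (hC : 0 ≤ C) {β : ℝ → Y}
    (hβcont : ContinuousOn β (Ici 0)) (hβ : IsQGRay K C β)
    {κ : ℝ} (hκ1 : 1 ≤ κ) (hκC : 3 * C ≤ κ)
    (hκρ : ∀ r, κ ≤ r → 3 * K ^ 2 * ρ r ≤ r)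
    {a b : ℝ} (ha : 0 ≤ a) (hab : a ≤ b)
    (hκs : ∀ s, s ∈ Icc a b → κ ≤ infDist (β s) Z) :
    dist (β a) (β b) ≤ infDist (β a) Z + infDist (β b) Z
      + (b - a) / (2 * K) + (C + infDist (β a) Z) / (3 * K ^ 2) := by
  have hK0 : (0:ℝ) < K := lt_of_lt_of_le one_pos hK
  have hZne : Z.Nonempty := by
    by_contra hcon
    rw [Set.not_nonempty_iff_eq_empty] at hcon
    have := hκs b ⟨hab, le_refl b⟩
    rw [hcon, infDist_empty] at this
    linarith
  obtain ⟨q, hq⟩ := aux_proj_nonempty hZcl hZne (β b)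
  have hδpos : (0:ℝ) < 2 * κ / (3 * K) := by positivity
  obtain ⟨n, hn⟩ := exists_nat_ge ((b - a) / (2 * κ / (3 * K)))
  have hlen : b - a ≤ n * (2 * κ / (3 * K)) := by
    rw [div_le_iff₀ hδpos] at hn
    linarith
  obtain ⟨p, hp, hqp⟩ := aux_chain hZcl hZ hK hC hβcont hβ hκ1 hκC hκρ n a b ha hab hlen hκs q hq
  have htri := dist_triangle4 (β a) p q (β b)
  have h1 : dist (β a) p = infDist (β a) Z := hp.2
  have h2 : dist q (β b) = infDist (β b) Z := by rw [dist_comm]; exact hq.2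
  have h3 : dist p q = dist q p := dist_comm p q
  linarith

end Chain

lemma aux_kappa_facts {ρ : ℝ → ℝ} (hρ : Sublinear ρ) {K C : ℝ} (hK : 1 ≤ K) (hC : 0 ≤ C) :
    3 * K ^ 2 ≤ kappa ρ K C ∧ 3 * C ≤ kappa ρ K C ∧ 1 ≤ kappa ρ K C ∧
      ∀ r, kappa ρ K C ≤ r → 3 * K ^ 2 * ρ r ≤ r := by
  have hK0 : (0:ℝ) < K := lt_of_lt_of_le one_pos hK
  set T := {R : ℝ | 0 ≤ R ∧ ∀ r ≥ R, 3 * K ^ 2 * ρ r ≤ r} with hTdef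
  have hκeq : kappa ρ K C = max (max (3 * K ^ 2) (3 * C)) (1 + sInf T) := rfl
  have hTne : T.Nonempty := by
    have h0 : (0:ℝ) < 1 / (3 * K ^ 2) := by positivity
    have hev : ∀ᶠ r in Filter.atTop, ρ r / r < 1 / (3 * K ^ 2) :=
      hρ.2.2.eventually_lt_const h0
    obtain ⟨R, hR⟩ := Filter.eventually_atTop.mp hev
    refine ⟨max R 1, le_trans zero_le_one (le_max_right _ _), fun r hr => ?_⟩
    have hr1 : (1:ℝ) ≤ r := le_trans (le_max_right _ _) hr
    have hrpos : (0:ℝ) < r := lt_of_lt_of_le one_pos hr1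
    have hdiv := hR r (le_trans (le_max_left _ _) hr)
    rw [div_lt_iff₀ hrpos] at hdiv
    have hc : 3 * K ^ 2 * (1 / (3 * K ^ 2) * r) = r := by field_simp
    nlinarith [mul_le_mul_of_nonneg_left hdiv.le (by positivity : (0:ℝ) ≤ 3 * K ^ 2)]
  have hInf0 : 0 ≤ sInf T := le_csInf hTne fun R hR => hR.1
  have h1 : 3 * K ^ 2 ≤ kappa ρ K C := by
    rw [hκeq]; exact le_trans (le_max_left _ _) (le_max_left _ _)
  have h2 : 3 * C ≤ kappa ρ K C := by
    rw [hκeq]; exact le_trans (le_max_right _ _) (le_max_left _ _)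
  have h3 : 1 ≤ kappa ρ K C := by
    rw [hκeq]
    exact le_trans (by linarith : (1:ℝ) ≤ 1 + sInf T) (le_max_right _ _)
  refine ⟨h1, h2, h3, fun r hr => ?_⟩
  have hmax : 1 + sInf T ≤ kappa ρ K C := by rw [hκeq]; exact le_max_right _ _
  have hsr : sInf T < r := by linarith
  obtain ⟨R, hRT, hRr⟩ := exists_lt_of_csInf_lt hTne hsr
  exact hRT.2 r hRr.le

/-- Cashen–Mackay, Corollary 4.3: dichotomy for a continuous quasi-geodesic ray
starting κ-close to a `ρ`-contracting closed set `Z`: either it stays within the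
closed `κ`-neighbourhood of `Z` at an unbounded set of times and its whole image is
within `κ'` of `Z`, or it eventually escapes `Z` at a definite linear rate after the
last time `T₀` at which it is at distance exactly `κ` from `Z`. -/
theorem contracting_dichotomy {Y : Type*} [MetricSpace Y] [ProperSpace Y]
    (hY : GeodesicSpace Y)
    (ρ : ℝ → ℝ) (hρ : Sublinear ρ)
    (Z : Set Y) (hZcl : IsClosed Z) (hZ : IsContracting ρ Z)
    (K' C' : ℝ) (hK' : 1 ≤ K') (hC' : 0 ≤ C')
    (β : ℝ → Y) (hβcont : ContinuousOn β (Ici 0)) (hβ : IsQGRay K' C' β)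
    (hstart : infDist (β 0) Z ≤ kappa ρ K' C') :
    (¬ BddAbove {t : ℝ | 0 ≤ t ∧ infDist (β t) Z ≤ kappa ρ K' C'} ∧
      ∀ t ≥ (0:ℝ), infDist (β t) Z ≤ kappa' ρ K' C') ∨
    (BddAbove {t : ℝ | 0 ≤ t ∧ infDist (β t) Z ≤ kappa ρ K' C'} ∧
      ∃ T₀ : ℝ, IsGreatest {t : ℝ | 0 ≤ t ∧ infDist (β t) Z ≤ kappa ρ K' C'} T₀ ∧
        infDist (β T₀) Z = kappa ρ K' C' ∧
        ∀ t ≥ (0:ℝ),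
          (1 / (2 * K')) * (t - T₀) - 2 * (C' + kappa ρ K' C') ≤ infDist (β t) Z) := by
  obtain ⟨hκK, hκC, hκ1, hκρ⟩ := aux_kappa_facts hρ hK' hC'
  have hK0 : (0:ℝ) < K' := lt_of_lt_of_le one_pos hK'
  have hK'ne : K' ≠ 0 := ne_of_gt hK0
  set κ := kappa ρ K' C' with hκdef
  set S := {t : ℝ | 0 ≤ t ∧ infDist (β t) Z ≤ κ} with hSdef
  have hfc : ContinuousOn (fun t => infDist (β t) Z) (Ici 0) :=
    (continuous_infDist_pt Z).comp_continuousOn hβcont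
  have hScl : IsClosed S := by
    have h := hfc.preimage_isClosed_of_isClosed isClosed_Ici (isClosed_Iic (a := κ))
    convert h using 1
    ext s; exact Iff.rfl
  have h0S : (0:ℝ) ∈ S := ⟨le_refl 0, hstart⟩
  by_cases hbdd : BddAbove S
  · right
    have hSne : S.Nonempty := ⟨0, h0S⟩
    have hT₀S : sSup S ∈ S := hScl.csSup_mem hSne hbdd
    set T₀ := sSup S with hT₀def
    have hT₀max : IsGreatest S T₀ := ⟨hT₀S, fun x hx => le_csSup hbdd hx⟩
    have hT₀0 : 0 ≤ T₀ := hT₀S.1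
    have hgt : ∀ s, T₀ < s → κ < infDist (β s) Z := by
      intro s hs
      by_contra hcon
      push_neg at hcon
      exact absurd (hT₀max.2 ⟨le_trans hT₀0 hs.le, hcon⟩) (not_le.mpr hs)
    have hfT₀ : infDist (β T₀) Z = κ := by
      refine le_antisymm hT₀S.2 ?_
      obtain ⟨htend, hmem⟩ := aux_approach_right (lt_add_one T₀)
      have htends : Filter.Tendsto (fun k : ℕ => infDist (β (T₀ + (T₀ + 1 - T₀)/(k+1))) Z)
          Filter.atTop (nhds (infDist (β T₀) Z)) := by
        apply ((hfc T₀ (mem_Ici.mpr hT₀0)).tendsto).comp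
        apply tendsto_nhdsWithin_of_tendsto_nhds_of_eventually_within _ htend
        exact Filter.Eventually.of_forall fun k => le_trans hT₀0 (hmem k).1.le
      apply ge_of_tendsto htends
      exact Filter.Eventually.of_forall fun k => (hgt _ (hmem k).1).le
    refine ⟨hbdd, T₀, hT₀max, hfT₀, ?_⟩
    intro t ht
    rcases le_or_gt t T₀ with htT | htT
    · have h0 : (0:ℝ) ≤ 1/(2*K') := by positivity
      have h1 : 1/(2*K') * (t - T₀) ≤ 1/(2*K') * 0 :=
        mul_le_mul_of_nonneg_left (by linarith) h0
      have h2 := infDist_nonneg (x := β t) (s := Z)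
      have h3 : 1/(2*K') * (0:ℝ) = 0 := by ring
      linarith
    · have hκs : ∀ s, s ∈ Icc T₀ t → κ ≤ infDist (β s) Z := by
        intro s hs
        rcases eq_or_lt_of_le hs.1 with heq | hlt
        · rw [← heq, hfT₀]
        · exact (hgt s hlt).le
      have hch := aux_chain_dist hZcl hZ hK' hC' hβcont hβ hκ1 hκC hκρ hT₀0 htT.le hκs
      rw [hfT₀] at hch
      have hqg := (hβ T₀ hT₀0 t (le_trans hT₀0 htT.le)).1
      rw [abs_sub_comm, abs_of_nonneg (by linarith : (0:ℝ) ≤ t - T₀)] at hqg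
      have hsplit : 1/K' * (t - T₀) = (t - T₀)/(2*K') + (t - T₀)/(2*K') := by
        field_simp; ring
      have hsmall : (C' + κ)/(3*K'^2) ≤ (C' + κ)/3 := by
        apply div_le_div_of_nonneg_left (by linarith) (by norm_num)
        nlinarith [hK']
      have hgoal : 1/(2*K') * (t - T₀) = (t - T₀)/(2*K') := one_div_mul_eq_div _ _
      rw [hgoal]
      linarith
  · left
    refine ⟨hbdd, fun t ht => ?_⟩
    by_cases hft : infDist (β t) Z ≤ κ
    · refine hft.trans ?_
      rw [kappa', ← hκdef]
      nlinarith [hκ1, hC', mul_nonneg (sq_nonneg K') (by linarith : (0:ℝ) ≤ κ),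
        mul_nonneg (sq_nonneg K') hC']
    · push_neg at hft
      obtain ⟨u, huS, htu⟩ := not_bddAbove_iff.mp hbdd t
      set A := S ∩ Icc 0 t with hAdef
      have hAcl : IsClosed A := hScl.inter isClosed_Icc
      have hAne : A.Nonempty := ⟨0, h0S, le_refl 0, ht⟩
      have hAbdd : BddAbove A := BddAbove.mono (fun s hs => hs.2) bddAbove_Icc
      set a' := sSup A with ha'def
      have ha'A : a' ∈ A := hAcl.csSup_mem hAne hAbdd
      have ha'0 : 0 ≤ a' := ha'A.2.1
      have ha't : a' ≤ t := ha'A.2.2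
      have ha'κ : infDist (β a') Z ≤ κ := ha'A.1.2
      have ha'lt : a' < t := lt_of_le_of_ne ha't (fun h => by rw [h] at ha'κ; linarith)
      have hgt1 : ∀ s, a' < s → s ≤ t → κ < infDist (β s) Z := by
        intro s h1 h2
        by_contra hcon
        push_neg at hcon
        have hsA : s ∈ A := ⟨⟨le_trans ha'0 h1.le, hcon⟩, le_trans ha'0 h1.le, h2⟩
        exact absurd (le_csSup hAbdd hsA) (not_le.mpr h1)
      have hfa'ge : κ ≤ infDist (β a') Z := by
        obtain ⟨htend, hmem⟩ := aux_approach_right ha'lt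
        have htends : Filter.Tendsto (fun k : ℕ => infDist (β (a' + (t - a')/(k+1))) Z)
            Filter.atTop (nhds (infDist (β a') Z)) := by
          apply ((hfc a' (mem_Ici.mpr ha'0)).tendsto).comp
          apply tendsto_nhdsWithin_of_tendsto_nhds_of_eventually_within _ htend
          exact Filter.Eventually.of_forall fun k => le_trans ha'0 (hmem k).1.le
        apply ge_of_tendsto htends
        exact Filter.Eventually.of_forall fun k => (hgt1 _ (hmem k).1 (hmem k).2).le
      have hfa' : infDist (β a') Z = κ := le_antisymm ha'κ hfa'ge
      set B := S ∩ Icc t u with hBdef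
      have hBcl : IsClosed B := hScl.inter isClosed_Icc
      have hBne : B.Nonempty := ⟨u, huS, htu.le, le_refl u⟩
      have hBbdd : BddBelow B := BddBelow.mono (fun s hs => hs.2) bddBelow_Icc
      set b' := sInf B with hb'def
      have hb'B : b' ∈ B := hBcl.csInf_mem hBne hBbdd
      have htb' : t ≤ b' := hb'B.2.1
      have hb'0 : 0 ≤ b' := le_trans ht htb'
      have hb'κ : infDist (β b') Z ≤ κ := hb'B.1.2
      have htlt : t < b' := lt_of_le_of_ne htb' (fun h => by rw [← h] at hb'κ; linarith)
      have hgt2 : ∀ s, t ≤ s → s < b' → κ < infDist (β s) Z := by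
        intro s h1 h2
        by_contra hcon
        push_neg at hcon
        have hsB : s ∈ B := ⟨⟨le_trans ht h1, hcon⟩, h1, le_trans h2.le hb'B.2.2⟩
        exact absurd (csInf_le hBbdd hsB) (not_le.mpr h2)
      have hfb'ge : κ ≤ infDist (β b') Z := by
        obtain ⟨htend, hmem⟩ := aux_approach_left htlt
        have htends : Filter.Tendsto (fun k : ℕ => infDist (β (b' + (t - b')/(k+1))) Z)
            Filter.atTop (nhds (infDist (β b') Z)) := by
          apply ((hfc b' (mem_Ici.mpr hb'0)).tendsto).comp
          apply tendsto_nhdsWithin_of_tendsto_nhds_of_eventually_within _ htend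
          exact Filter.Eventually.of_forall fun k => le_trans ht (hmem k).1
        apply ge_of_tendsto htends
        exact Filter.Eventually.of_forall fun k => (hgt2 _ (hmem k).1 (hmem k).2).le
      have hfb' : infDist (β b') Z = κ := le_antisymm hb'κ hfb'ge
      have hκs : ∀ s, s ∈ Icc a' b' → κ ≤ infDist (β s) Z := by
        intro s hs
        rcases eq_or_lt_of_le hs.1 with heq | hlt
        · rw [← heq, hfa']
        · rcases le_or_gt s t with hst | hst
          · exact (hgt1 s hlt hst).le
          · rcases eq_or_lt_of_le hs.2 with heq2 | hlt2
            · rw [heq2, hfb']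
            · exact (hgt2 s hst.le hlt2).le
      have hch := aux_chain_dist hZcl hZ hK' hC' hβcont hβ hκ1 hκC hκρ ha'0
        (le_trans ha't htb') hκs
      rw [hfa', hfb'] at hch
      have hqg := (hβ a' ha'0 b' hb'0).1
      rw [abs_sub_comm, abs_of_nonneg (by linarith : (0:ℝ) ≤ b' - a')] at hqg
      have hsplit : 1/K' * (b' - a') = (b' - a')/(2*K') + (b' - a')/(2*K') := by
        field_simp; ring
      have hW : (b' - a')/(2*K') ≤ 2*κ + C' + (C' + κ)/(3*K'^2) := by linarith
      have hKW : K' * ((b' - a')/2) = K'^2 * ((b' - a')/(2*K')) := by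
        field_simp
      have hend : infDist (β t) Z ≤ κ + C' + K' * ((b' - a')/2) := by
        rcases le_total (t - a') (b' - t) with hside | hside
        · have h1 : infDist (β t) Z ≤ infDist (β a') Z + dist (β t) (β a') :=
            infDist_le_infDist_add_dist
          have h2 := (hβ t ht a' ha'0).2
          rw [abs_of_nonneg (by linarith : (0:ℝ) ≤ t - a')] at h2
          have h3 : K' * (t - a') ≤ K' * ((b' - a')/2) :=
            mul_le_mul_of_nonneg_left (by linarith) hK0.le
          rw [hfa'] at h1
          linarith
        · have h1 : infDist (β t) Z ≤ infDist (β b') Z + dist (β t) (β b') :=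
            infDist_le_infDist_add_dist
          have h2 := (hβ t ht b' hb'0).2
          rw [abs_sub_comm, abs_of_nonneg (by linarith : (0:ℝ) ≤ b' - t)] at h2
          have h3 : K' * (b' - t) ≤ K' * ((b' - a')/2) :=
            mul_le_mul_of_nonneg_left (by linarith) hK0.le
          rw [hfb'] at h1
          linarith
      have hmul : K'^2 * ((b' - a')/(2*K')) ≤ K'^2 * (2*κ + C' + (C' + κ)/(3*K'^2)) :=
        mul_le_mul_of_nonneg_left hW (by positivity)
      have hid4 : K'^2 * ((C' + κ)/(3*K'^2)) = (C' + κ)/3 := by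
        field_simp
      rw [kappa', ← hκdef]
      nlinarith [hκ1, hC', hend, hKW, hmul, hid4]
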